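/- Let q be a prime number, let l, k be positive natural numbers, and set m = l + v_q(l!). Then P(q^m·(k + l) − 1, q·l − 1) ≠ P(h, r) for all natural numbers h and r with r ≥ q·l. -/

import Mathlib

open Finset

private lemma padicValNat_sub_of_pow_dvd {q : ℕ} (hq : q.Prime) {m A j : ℕ}
    (hA : q ^ m ∣ A) (hA0 : A ≠ 0) (hj : 0 < j) (hjm : j < q ^ m) :
    padicValNat q (A - j) = padicValNat q j := by
  haveI : Fact q.Prime := ⟨hq⟩
  set t := padicValNat q j with ht
  have hqt : q ^ t ∣ j := pow_padicValNat_dvd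
  have htm : t < m := by
    have h1 : q ^ t ≤ j := Nat.le_of_dvd hj hqt
    exact (Nat.pow_lt_pow_iff_right hq.one_lt).mp (lt_of_le_of_lt h1 hjm)
  have hjA : j < A := lt_of_lt_of_le hjm (Nat.le_of_dvd (Nat.pos_of_ne_zero hA0) hA)
  have hAj0 : A - j ≠ 0 := by omega
  have h1 : q ^ t ∣ A - j :=
    Nat.dvd_sub ((pow_dvd_pow q htm.le).trans hA) hqt
  have h2 : ¬ q ^ (t + 1) ∣ A - j := by
    intro hdvd
    have hA' : q ^ (t + 1) ∣ A := (pow_dvd_pow q htm).trans hA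
    have : q ^ (t + 1) ∣ j := by
      have := Nat.dvd_sub hA' hdvd
      rwa [Nat.sub_sub_self hjA.le] at this
    exact pow_succ_padicValNat_not_dvd hj.ne' this
  have hle : t ≤ padicValNat q (A - j) := (padicValNat_dvd_iff_le hAj0).mp h1
  have hge : padicValNat q (A - j) ≤ t := by
    by_contra h
    exact h2 ((padicValNat_dvd_iff_le hAj0).mpr (by omega))
  omega

/-- For a prime `q`, positive naturals `l, k`, and `m = l + v_q(l!)`,
one has `P(q^m·(k + l) − 1, q·l − 1) ≠ P(h, r)` whenever `r ≥ q·l`. -/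
theorem descFactorial_padic_ne' (q l k : ℕ) (hq : Nat.Prime q) (hl : 0 < l)
    (hk : 0 < k) (m : ℕ) (hm : m = l + padicValNat q (Nat.factorial l)) :
    ∀ h r : ℕ, q * l ≤ r →
      Nat.descFactorial (q ^ m * (k + l) - 1) (q * l - 1) ≠
        Nat.descFactorial h r := by
  haveI : Fact q.Prime := ⟨hq⟩
  intro h r hr heq
  set A := q ^ m * (k + l) with hA
  set b := q * l - 1 with hb
  have hq2 : 2 ≤ q := hq.two_le
  -- q * l ≤ q ^ m
  have hlq : l ≤ q ^ (l - 1) := by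
    calc l ≤ 2 ^ (l - 1) := by
            have := @Nat.lt_two_pow_self (l - 1); omega
      _ ≤ q ^ (l - 1) := Nat.pow_le_pow_left hq2 _
  have hqlm : q * l ≤ q ^ m := by
    calc q * l ≤ q * q ^ (l - 1) := Nat.mul_le_mul_left q hlq
      _ = q ^ l := by rw [← pow_succ']; congr 1; omega
      _ ≤ q ^ m := Nat.pow_le_pow_right (by omega) (by omega)
  have hqmA : q ^ m ≤ A := Nat.le_mul_of_pos_right _ (by omega)
  have hql0 : 0 < q * l := by positivity
  have hA0 : A ≠ 0 := by omega
  have hbA : b < A := by omega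
  -- the left side: valuations
  have hLHS : Nat.descFactorial (A - 1) b = ∏ i ∈ range b, (A - (i + 1)) := by
    rw [Nat.descFactorial_eq_prod_range]
    exact Finset.prod_congr rfl fun i _ => by omega
  have hmem : ∀ i ∈ range b, A - (i + 1) ≠ 0 := by
    intro i hi
    simp only [mem_range] at hi
    omega
  have hval : padicValNat q (Nat.descFactorial (A - 1) b) = padicValNat q (Nat.factorial b) := by
    rw [hLHS, ← Finset.prod_range_add_one_eq_factorial,
      ← Nat.factorization_def _ hq, ← Nat.factorization_def _ hq,
      Nat.factorization_prod hmem, Nat.factorization_prod (fun i _ => by omega),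
      Finsupp.finset_sum_apply, Finsupp.finset_sum_apply]
    refine Finset.sum_congr rfl fun i hi => ?_
    simp only [mem_range] at hi
    rw [Nat.factorization_def _ hq, Nat.factorization_def _ hq]
    exact padicValNat_sub_of_pow_dvd hq ⟨k + l, rfl⟩ hA0 (by omega) (by omega)
  -- nonzero
  have hL0 : Nat.descFactorial (A - 1) b ≠ 0 := by
    rw [Ne, Nat.descFactorial_eq_zero_iff_lt, not_lt]
    omega
  -- (q*l)! divides the right side
  have hdvd : Nat.factorial (q * l) ∣ Nat.descFactorial h r :=
    (Nat.factorial_dvd_factorial hr).trans (Nat.factorial_dvd_descFactorial h r)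
  have hR0 : Nat.descFactorial h r ≠ 0 := heq ▸ hL0
  have hvle : padicValNat q (Nat.factorial (q * l)) ≤ padicValNat q (Nat.descFactorial h r) :=
    (padicValNat_dvd_iff_le hR0).mp (pow_padicValNat_dvd.trans hdvd)
  -- (q*l)! = (q*l) * b!
  have hfac : Nat.factorial (q * l) = (q * l) * Nat.factorial b := by
    have : q * l = b + 1 := by omega
    rw [this, Nat.factorial_succ]
  have hvmul : padicValNat q (Nat.factorial (q * l)) =
      padicValNat q (q * l) + padicValNat q (Nat.factorial b) := by
    rw [hfac, padicValNat.mul (by omega) (Nat.factorial_ne_zero b)]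
  have hone : 1 ≤ padicValNat q (q * l) :=
    one_le_padicValNat_of_dvd hql0.ne' ⟨l, rfl⟩
  rw [← heq, hval] at hvle
  omega
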